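/- Let G and G' be Gauss diagrams such that G' is obtained from G by a sequence of n crossing changes. Then there exist ε₁,…,ε_n ∈ {−1,0,+1} and nonzero integers m₁,…,m_n such that W_G(t) − W_{G'}(t) = ∑_{i=1}^n ε_i (t^{m_i} + t^{−m_i}). -/

import Mathlib

open scoped Classical

/-- A Gauss diagram with `n` chords: the `2n` marked points live on the cyclic group
`ZMod (2*n)` (the oriented circle); each chord `i` is the ordered pair
`(tail i, head i)` of marked points and carries a sign (writhe) `sign i ∈ {+1, -1}`;
all `2n` endpoints are distinct. -/
structure GaussDiagram (n : ℕ) where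
  tail : Fin n → ZMod (2 * n)
  head : Fin n → ZMod (2 * n)
  sign : Fin n → ℤ
  sign_mem : ∀ i, sign i = 1 ∨ sign i = -1
  endpoints_inj : Function.Injective
    (fun p : Fin n × Bool => if p.2 then head p.1 else tail p.1)

namespace GaussDiagram

variable {n : ℕ}

/-- `x` lies on the open arc running in the circle's orientation from `a` to `b`. -/
def arcMem (a b x : ZMod (2 * n)) : Prop :=
  0 < (x - a).val ∧ (x - a).val < (b - a).val

/-- `x` lies on the open oriented arc from the tail to the head of chord `i`. -/
def inArc (G : GaussDiagram n) (i : Fin n) (x : ZMod (2 * n)) : Prop :=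
  arcMem (G.tail i) (G.head i) x

/-- Chords `i` and `j` are linked: exactly one endpoint of `j` lies on the open
oriented arc from the tail to the head of `i`. -/
def linked (G : GaussDiagram n) (i j : Fin n) : Prop :=
  Xor' (G.inArc i (G.tail j)) (G.inArc i (G.head j))

/-- Chord `j` crosses chord `i` from right to left. -/
def crossesRL (G : GaussDiagram n) (i j : Fin n) : Prop :=
  G.linked i j ∧ G.inArc i (G.head j)

/-- Chord `j` crosses chord `i` from left to right. -/
def crossesLR (G : GaussDiagram n) (i j : Fin n) : Prop :=
  G.linked i j ∧ G.inArc i (G.tail j)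

/-- The index of the chord `i`: `Ind(i) = r₊ − r₋ − l₊ + l₋`. -/
noncomputable def ind (G : GaussDiagram n) (i : Fin n) : ℤ :=
  ((Finset.univ.filter fun j => G.crossesRL i j ∧ G.sign j = 1).card : ℤ)
    - ((Finset.univ.filter fun j => G.crossesRL i j ∧ G.sign j = -1).card : ℤ)
    - ((Finset.univ.filter fun j => G.crossesLR i j ∧ G.sign j = 1).card : ℤ)
    + ((Finset.univ.filter fun j => G.crossesLR i j ∧ G.sign j = -1).card : ℤ)

/-- The `k`-th writhe `J_k(G)`: the number of positive chords of index `k` minus the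
number of negative chords of index `k`. -/
noncomputable def J (G : GaussDiagram n) (k : ℤ) : ℤ :=
  ((Finset.univ.filter fun i => G.ind i = k ∧ G.sign i = 1).card : ℤ)
    - ((Finset.univ.filter fun i => G.ind i = k ∧ G.sign i = -1).card : ℤ)

/-- The writhe polynomial `W_G(t) = ∑_{Ind(c) ≠ 0} w(c) t^{Ind(c)} = ∑_{k ≠ 0} J_k(G) t^k`. -/
noncomputable def writhePoly (G : GaussDiagram n) : LaurentPolynomial ℤ :=
  ∑ i ∈ Finset.univ.filter (fun i => G.ind i ≠ 0),
    LaurentPolynomial.C (G.sign i) * LaurentPolynomial.T (G.ind i)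

/-- The odd writhe `J(G) = ∑_{c ∈ Odd(G)} w(c)`. -/
noncomputable def oddWrithe (G : GaussDiagram n) : ℤ :=
  ∑ i ∈ Finset.univ.filter (fun i => Odd (G.ind i)), G.sign i

/-- `G'` is obtained from `G` by a crossing change at the chord `c`: the tail and head
of `c` are interchanged and its sign is negated, all other chords being unchanged. -/
def IsCrossingChangeAt (G G' : GaussDiagram n) (c : Fin n) : Prop :=
  G'.tail c = G.head c ∧ G'.head c = G.tail c ∧ G'.sign c = -G.sign c ∧
    ∀ j : Fin n, j ≠ c →
      G'.tail j = G.tail j ∧ G'.head j = G.head j ∧ G'.sign j = G.sign j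

/-- `G'` is obtained from `G` by a crossing change (at some chord). -/
def IsCrossingChange (G G' : GaussDiagram n) : Prop :=
  ∃ c, IsCrossingChangeAt G G' c

/-- `G'` is obtained from `G` by a sequence of `m` crossing changes. -/
def ChangedBy (m : ℕ) (G G' : GaussDiagram n) : Prop :=
  ∃ f : ℕ → GaussDiagram n, f 0 = G ∧ f m = G' ∧
    ∀ i < m, IsCrossingChange (f i) (f (i + 1))

end GaussDiagram

namespace GaussDiagram

variable {n : ℕ}

lemma ep_ne (G : GaussDiagram n) {i j : Fin n} {b b' : Bool} (h : (i, b) ≠ (j, b')) :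
    (if b then G.head i else G.tail i) ≠ (if b' then G.head j else G.tail j) :=
  fun he => h (G.endpoints_inj he)

lemma tail_ne_head_self (G : GaussDiagram n) (i : Fin n) : G.tail i ≠ G.head i := by
  have := G.ep_ne (i := i) (j := i) (b := false) (b' := true) (by simp)
  simpa using this

lemma not_linked_self (G : GaussDiagram n) (i : Fin n) : ¬ G.linked i i := by
  simp [linked, Xor', inArc, arcMem, sub_self]

lemma arcMem_flip {a b x : ZMod (2 * n)} (hn : 0 < n) (hab : a ≠ b)
    (hxa : x ≠ a) (hxb : x ≠ b) :
    arcMem b a x ↔ ¬ arcMem a b x := by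
  haveI : NeZero (2 * n) := ⟨by omega⟩
  have hu0 : (x - a).val ≠ 0 := fun h =>
    hxa (sub_eq_zero.mp ((ZMod.val_eq_zero _).mp h))
  have hv0 : (b - a).val ≠ 0 := fun h =>
    hab (Eq.symm (sub_eq_zero.mp ((ZMod.val_eq_zero _).mp h)))
  have huv : (x - a).val ≠ (b - a).val := fun h =>
    hxb (sub_left_inj.mp (ZMod.val_injective _ h))
  have hu : (x - a).val < 2 * n := ZMod.val_lt _
  have hv : (b - a).val < 2 * n := ZMod.val_lt _
  have h1 : x - b = (x - a) + -(b - a) := by ring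
  have h2 : a - b = -(b - a) := by ring
  unfold arcMem
  rw [h1, h2, ZMod.val_add, ZMod.neg_val, if_neg (sub_ne_zero.mpr (Ne.symm hab))]
  rcases Nat.lt_or_ge (x - a).val (b - a).val with hlt | hge
  · rw [Nat.mod_eq_of_lt (by omega)]
    omega
  · rw [Nat.mod_eq_sub_mod (by omega),
      show (x - a).val + (2 * n - (b - a).val) - 2 * n
        = (x - a).val - (b - a).val by omega,
      Nat.mod_eq_of_lt (by omega)]
    omega

lemma sum_sign_ite (G : GaussDiagram n) (P : Fin n → Prop) :
    ∑ k, (if P k then G.sign k else 0)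
      = ((Finset.univ.filter fun k => P k ∧ G.sign k = 1).card : ℤ)
        - ((Finset.univ.filter fun k => P k ∧ G.sign k = -1).card : ℤ) := by
  rw [← Finset.sum_boole, ← Finset.sum_boole, ← Finset.sum_sub_distrib]
  refine Finset.sum_congr rfl fun k _ => ?_
  rcases G.sign_mem k with h | h <;> by_cases hp : P k <;> simp [h, hp]

lemma ind_eq_sum (G : GaussDiagram n) (i : Fin n) :
    G.ind i = (∑ k, if G.crossesRL i k then G.sign k else 0)
      - (∑ k, if G.crossesLR i k then G.sign k else 0) := by
  rw [sum_sign_ite, sum_sign_ite]; unfold ind; ring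

section Change

variable {G G' : GaussDiagram n} {c : Fin n} (hc : IsCrossingChangeAt G G' c)

include hc

lemma inArc_change {j : Fin n} (hj : j ≠ c) (x : ZMod (2 * n)) :
    G'.inArc j x ↔ G.inArc j x := by
  rw [inArc, inArc, (hc.2.2.2 j hj).1, (hc.2.2.2 j hj).2.1]

lemma crosses_change_other {j k : Fin n} (hj : j ≠ c) (hk : k ≠ c) :
    (G'.crossesRL j k ↔ G.crossesRL j k) ∧ (G'.crossesLR j k ↔ G.crossesLR j k) := by
  unfold crossesRL crossesLR linked
  simp only [inArc_change hc hj, (hc.2.2.2 k hk).1, (hc.2.2.2 k hk).2.1]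
  tauto

lemma crosses_change_at_c {j : Fin n} (hj : j ≠ c) :
    (G'.crossesRL j c ↔ G.crossesLR j c) ∧ (G'.crossesLR j c ↔ G.crossesRL j c) := by
  unfold crossesRL crossesLR linked
  simp only [inArc_change hc hj, hc.1, hc.2.1]
  unfold Xor' Xor
  tauto

lemma crosses_change_of_c {k : Fin n} (hk : k ≠ c) :
    (G'.crossesRL c k ↔ G.crossesLR c k) ∧ (G'.crossesLR c k ↔ G.crossesRL c k) := by
  have hn : 0 < n := c.pos
  have htk : G.tail k ≠ G.tail c := by
    have := G.ep_ne (i := k) (j := c) (b := false) (b' := false) (by simp [hk]); simpa using this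
  have htk' : G.tail k ≠ G.head c := by
    have := G.ep_ne (i := k) (j := c) (b := false) (b' := true) (by simp); simpa using this
  have hhk : G.head k ≠ G.tail c := by
    have := G.ep_ne (i := k) (j := c) (b := true) (b' := false) (by simp); simpa using this
  have hhk' : G.head k ≠ G.head c := by
    have := G.ep_ne (i := k) (j := c) (b := true) (b' := true) (by simp [hk]); simpa using this
  have hth := G.tail_ne_head_self c
  have hflip : ∀ x : ZMod (2 * n), x ≠ G.tail c → x ≠ G.head c →
      (arcMem (G.head c) (G.tail c) x ↔ ¬ arcMem (G.tail c) (G.head c) x) := by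
    intro x h1 h2
    exact arcMem_flip hn hth h1 h2
  unfold crossesRL crossesLR linked inArc
  simp only [hc.1, hc.2.1, (hc.2.2.2 k hk).1, (hc.2.2.2 k hk).2.1]
  rw [hflip _ htk htk', hflip _ hhk hhk']
  unfold Xor' Xor
  tauto

lemma ind_change_at_c : G'.ind c = - G.ind c := by
  rw [ind_eq_sum, ind_eq_sum]
  have h1 : ∀ k, (if G'.crossesRL c k then G'.sign k else 0)
      = (if G.crossesLR c k then G.sign k else 0) := by
    intro k
    by_cases hk : k = c
    · subst hk
      rw [if_neg (fun h => G'.not_linked_self _ h.1),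
        if_neg (fun h => G.not_linked_self _ h.1)]
    · rw [if_congr (crosses_change_of_c hc hk).1 rfl rfl, (hc.2.2.2 k hk).2.2]
  have h2 : ∀ k, (if G'.crossesLR c k then G'.sign k else 0)
      = (if G.crossesRL c k then G.sign k else 0) := by
    intro k
    by_cases hk : k = c
    · subst hk
      rw [if_neg (fun h => G'.not_linked_self _ h.1),
        if_neg (fun h => G.not_linked_self _ h.1)]
    · rw [if_congr (crosses_change_of_c hc hk).2 rfl rfl, (hc.2.2.2 k hk).2.2]
  simp only [h1, h2]
  ring

lemma ind_change_other {j : Fin n} (hj : j ≠ c) : G'.ind j = G.ind j := by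
  rw [ind_eq_sum, ind_eq_sum]
  have key : ∀ k, (if G'.crossesRL j k then G'.sign k else 0)
        - (if G'.crossesLR j k then G'.sign k else 0)
      = (if G.crossesRL j k then G.sign k else 0)
        - (if G.crossesLR j k then G.sign k else 0) := by
    intro k
    by_cases hk : k = c
    · subst hk
      rw [if_congr (crosses_change_at_c hc hj).1 rfl rfl,
        if_congr (crosses_change_at_c hc hj).2 rfl rfl, hc.2.2.1]
      split_ifs <;> ring
    · rw [if_congr (crosses_change_other hc hj hk).1 rfl rfl,
        if_congr (crosses_change_other hc hj hk).2 rfl rfl, (hc.2.2.2 k hk).2.2]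
  rw [← Finset.sum_sub_distrib, ← Finset.sum_sub_distrib]
  exact Finset.sum_congr rfl fun k _ => key k

end Change

lemma writhePoly_step {G G' : GaussDiagram n} (h : IsCrossingChange G G') :
    ∃ ε μ : ℤ, (ε = -1 ∨ ε = 0 ∨ ε = 1) ∧ μ ≠ 0 ∧
      G.writhePoly - G'.writhePoly
        = LaurentPolynomial.C ε * (LaurentPolynomial.T μ + LaurentPolynomial.T (-μ)) := by
  obtain ⟨c, hc⟩ := h
  have hindc := ind_change_at_c hc
  by_cases h0 : G.ind c = 0
  · refine ⟨0, 1, by tauto, one_ne_zero, ?_⟩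
    have hall : ∀ i, G'.ind i = G.ind i := by
      intro i
      by_cases hi : i = c
      · subst hi; rw [hindc, h0]; omega
      · exact ind_change_other hc hi
    have : G'.writhePoly = G.writhePoly := by
      unfold writhePoly
      refine Finset.sum_congr ?_ ?_
      · ext i; simp [hall i]
      · intro i hi
        simp only [Finset.mem_filter] at hi
        have hi' : i ≠ c := fun h => hi.2 (h ▸ h0)
        rw [hall i, (hc.2.2.2 i hi').2.2]
    rw [this]
    simp
  · refine ⟨G.sign c, G.ind c, by rcases G.sign_mem c with h | h <;> tauto, h0, ?_⟩
    unfold writhePoly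
    rw [Finset.sum_filter, Finset.sum_filter, ← Finset.sum_sub_distrib]
    rw [Finset.sum_eq_single c]
    · rw [if_pos h0, hindc, hc.2.2.1, if_pos (by omega : ¬ -G.ind c = 0)]
      rw [map_neg, neg_mul, sub_neg_eq_add, mul_add]
    · intro i _ hi
      rw [ind_change_other hc hi, (hc.2.2.2 i hi).2.2]
      ring
    · intro h; exact absurd (Finset.mem_univ c) h

end GaussDiagram

/-- if `G'` is obtained from `G` by a sequence of `m` crossing changes, then
`W_G(t) − W_{G'}(t) = ∑_{i=1}^m ε_i (t^{m_i} + t^{−m_i})` for some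
`ε_i ∈ {−1, 0, +1}` and nonzero integers `m_i`. -/
theorem writhePoly_changedBy {n : ℕ} (m : ℕ) (G G' : GaussDiagram n)
    (h : GaussDiagram.ChangedBy m G G') :
    ∃ ε μ : Fin m → ℤ, (∀ i, ε i = -1 ∨ ε i = 0 ∨ ε i = 1) ∧ (∀ i, μ i ≠ 0) ∧
      G.writhePoly - G'.writhePoly =
        ∑ i : Fin m,
          LaurentPolynomial.C (ε i) *
            (LaurentPolynomial.T (μ i) + LaurentPolynomial.T (-μ i)) := by
  induction m generalizing G' with
  | zero =>
    obtain ⟨f, h0, hm, _⟩ := h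
    refine ⟨fun _ => 0, fun _ => 1, fun i => i.elim0, fun i => i.elim0, ?_⟩
    rw [← h0, hm]
    simp
  | succ m ih =>
    obtain ⟨f, h0, hm, hstep⟩ := h
    obtain ⟨ε, μ, hε, hμ, heq⟩ := ih (f m) ⟨f, h0, rfl, fun i hi => hstep i (by omega)⟩
    obtain ⟨ε', μ', hε', hμ', heq'⟩ :=
      GaussDiagram.writhePoly_step (hm ▸ hstep m (lt_add_one m))
    refine ⟨Fin.snoc ε ε', Fin.snoc μ μ', ?_, ?_, ?_⟩
    · intro i
      induction i using Fin.lastCases with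
      | last => simpa using hε'
      | cast i => simpa using hε i
    · intro i
      induction i using Fin.lastCases with
      | last => simpa using hμ'
      | cast i => simpa using hμ i
    · rw [Fin.sum_univ_castSucc]
      simp only [Fin.snoc_castSucc, Fin.snoc_last]
      rw [← heq, ← heq']
      ring
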